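/- Lemma 3, part (ii): Let N, K, F be positive integers, M ≥ 0 a real, W_1,…,W_N i.i.d. uniform on {1,…,2^F}, and V_k = g_k(W_1,…,W_N) for k ∈ {1,…,K} where each g_k maps into a set of size at most ⌊2^{F·M}⌋. Fix ℓ ∈ {1,…,min(K,N)} and for k ∈ {1,…,ℓ} define α_k := (1/(F·binom(N,ℓ)·ℓ!))·∑_{d ∈ Q_ℓ^dist} I(W_{d_k}; V_1,…,V_k | W_{d_1},…,W_{d_{k−1}}), where Q_ℓ^dist is the set of ordered ℓ-tuples (d_1,…,d_ℓ) of pairwise distinct elements of {1,…,N}. Then ∑_{k=1}^{ℓ} α_k ≤ ℓ²·M/N. -/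

import Mathlib

set_option maxHeartbeats 1000000


/-- Probability that the discrete random variable `X` (on finite space `Ω` with
probability mass function `p`) takes the value `x`. -/
noncomputable def pr {Ω : Type*} [Fintype Ω] {α : Type*} [DecidableEq α]
    (p : Ω → ℝ) (X : Ω → α) (x : α) : ℝ :=
  ∑ ω ∈ Finset.univ.filter (fun ω => X ω = x), p ω

/-- Shannon entropy (base 2) of the discrete random variable `X`. -/
noncomputable def ent {Ω : Type*} [Fintype Ω] {α : Type*} [DecidableEq α]
    (p : Ω → ℝ) (X : Ω → α) : ℝ :=
  -∑ x ∈ Finset.univ.image X, pr p X x * Real.logb 2 (pr p X x)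

/-- Conditional mutual information `I(X;Y|Z) = H(X,Z) + H(Y,Z) − H(X,Y,Z) − H(Z)`
(base 2). -/
noncomputable def cmi {Ω : Type*} [Fintype Ω] {α β γ : Type*}
    [DecidableEq α] [DecidableEq β] [DecidableEq γ]
    (p : Ω → ℝ) (X : Ω → α) (Y : Ω → β) (Z : Ω → γ) : ℝ :=
  ent p (fun ω => (X ω, Z ω)) + ent p (fun ω => (Y ω, Z ω))
    - ent p (fun ω => (X ω, Y ω, Z ω)) - ent p Z

section Base

variable {Ω : Type*} [Fintype Ω] {α β γ : Type*} [DecidableEq α] [DecidableEq β] [DecidableEq γ]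
  {p : Ω → ℝ}

lemma pr_nonneg (hp : ∀ ω, 0 ≤ p ω) (X : Ω → α) (x : α) : 0 ≤ pr p X x :=
  Finset.sum_nonneg fun ω _ => hp ω

lemma pr_comp (p : Ω → ℝ) (X : Ω → α) (π : α → β) (y : β) :
    pr p (fun ω => π (X ω)) y
      = ∑ x ∈ (Finset.univ.image X).filter (fun x => π x = y), pr p X x := by
  have hmaps : ∀ ω ∈ Finset.univ.filter (fun ω => π (X ω) = y),
      X ω ∈ (Finset.univ.image X).filter (fun x => π x = y) := by
    intro ω hω
    simp only [Finset.mem_filter] at hω ⊢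
    exact ⟨Finset.mem_image_of_mem X (Finset.mem_univ ω), hω.2⟩
  have h := Finset.sum_fiberwise_of_maps_to hmaps p
  rw [show pr p (fun ω => π (X ω)) y
      = ∑ ω ∈ Finset.univ.filter (fun ω => π (X ω) = y), p ω from rfl, ← h]
  refine Finset.sum_congr rfl fun x hx => ?_
  simp only [Finset.mem_filter] at hx
  unfold pr
  refine Finset.sum_congr ?_ fun _ _ => rfl
  ext ω
  simp only [Finset.mem_filter, Finset.mem_univ, true_and]
  constructor
  · rintro ⟨_, h2⟩; exact h2
  · intro h2; exact ⟨h2 ▸ hx.2, h2⟩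

lemma sum_image_comp (p : Ω → ℝ) (X : Ω → α) (π : α → β) (φ : β → ℝ) :
    ∑ x ∈ Finset.univ.image X, pr p X x * φ (π x)
      = ∑ y ∈ Finset.univ.image (fun ω => π (X ω)), pr p (fun ω => π (X ω)) y * φ y := by
  have himg : Finset.univ.image (fun ω => π (X ω)) = (Finset.univ.image X).image π := by
    rw [Finset.image_image]; rfl
  rw [himg]
  have hmaps : ∀ x ∈ Finset.univ.image X, π x ∈ (Finset.univ.image X).image π :=
    fun x hx => Finset.mem_image_of_mem π hx
  rw [← Finset.sum_fiberwise_of_maps_to hmaps (fun x => pr p X x * φ (π x))]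
  refine Finset.sum_congr rfl fun y hy => ?_
  rw [pr_comp p X π y, Finset.sum_mul]
  refine Finset.sum_congr rfl fun x hx => ?_
  simp only [Finset.mem_filter] at hx
  rw [hx.2]

lemma pr_le_pr_comp (hp : ∀ ω, 0 ≤ p ω) (X : Ω → α) (π : α → β) (x : α) :
    pr p X x ≤ pr p (fun ω => π (X ω)) (π x) := by
  refine Finset.sum_le_sum_of_subset_of_nonneg ?_ (fun ω _ _ => hp ω)
  intro ω hω
  simp only [Finset.mem_filter, Finset.mem_univ, true_and] at hω ⊢
  rw [hω]

lemma ent_comp_le (hp : ∀ ω, 0 ≤ p ω) (X : Ω → α) (π : α → β) :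
    ent p (fun ω => π (X ω)) ≤ ent p X := by
  unfold ent
  rw [← sum_image_comp p X π (fun y => Real.logb 2 (pr p (fun ω => π (X ω)) y))]
  rw [neg_le_neg_iff]
  refine Finset.sum_le_sum fun x _ => ?_
  rcases eq_or_lt_of_le (pr_nonneg hp X x) with h0 | h0
  · rw [← h0]; simp
  · refine mul_le_mul_of_nonneg_left ?_ (le_of_lt h0)
    exact Real.logb_le_logb_of_le one_lt_two h0 (pr_le_pr_comp hp X π x)

lemma ent_congr (hp : ∀ ω, 0 ≤ p ω) {X : Ω → α} {Y : Ω → β}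
    (f : α → β) (g : β → α) (hf : ∀ ω, Y ω = f (X ω)) (hg : ∀ ω, X ω = g (Y ω)) :
    ent p X = ent p Y := by
  have h1 : ent p (fun ω => f (X ω)) ≤ ent p X := ent_comp_le hp X f
  have h2 : ent p (fun ω => g (Y ω)) ≤ ent p Y := ent_comp_le hp Y g
  have e1 : (fun ω => f (X ω)) = Y := funext fun ω => (hf ω).symm
  have e2 : (fun ω => g (Y ω)) = X := funext fun ω => (hg ω).symm
  rw [e1] at h1; rw [e2] at h2
  exact le_antisymm h2 h1

lemma sum_pr_image (p : Ω → ℝ) (X : Ω → α) :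
    ∑ x ∈ Finset.univ.image X, pr p X x = ∑ ω, p ω := by
  have hmaps : ∀ ω ∈ Finset.univ, X ω ∈ Finset.univ.image X :=
    fun ω hω => Finset.mem_image_of_mem X hω
  exact Finset.sum_fiberwise_of_maps_to hmaps p

lemma sum_pr_pair_left (p : Ω → ℝ) (X : Ω → α) (Z : Ω → γ) (z : γ) :
    ∑ x ∈ Finset.univ.image X, pr p (fun ω => (X ω, Z ω)) (x, z) = pr p Z z := by
  have hmaps : ∀ ω ∈ Finset.univ.filter (fun ω => Z ω = z),
      X ω ∈ Finset.univ.image X := fun ω _ => Finset.mem_image_of_mem X (Finset.mem_univ ω)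
  have h := Finset.sum_fiberwise_of_maps_to hmaps p
  rw [show pr p Z z = ∑ ω ∈ Finset.univ.filter (fun ω => Z ω = z), p ω from rfl, ← h]
  refine Finset.sum_congr rfl fun x _ => ?_
  unfold pr
  refine Finset.sum_congr ?_ fun _ _ => rfl
  ext ω
  simp only [Finset.mem_filter, Finset.mem_univ, true_and, Prod.mk.injEq]
  tauto

end Base

section Base2

variable {Ω : Type*} [Fintype Ω] {α β γ : Type*} [DecidableEq α] [DecidableEq β] [DecidableEq γ]
  {p : Ω → ℝ}

lemma cmi_nonneg (hp : ∀ ω, 0 ≤ p ω) (hp1 : ∑ ω, p ω = 1)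
    (X : Ω → α) (Y : Ω → β) (Z : Ω → γ) : 0 ≤ cmi p X Y Z := by
  set T : Ω → α × β × γ := fun ω => (X ω, Y ω, Z ω) with hT
  set r : α × β × γ → ℝ := fun t => pr p T t with hr
  set a : α × β × γ → ℝ := fun t => pr p (fun ω => (X ω, Z ω)) (t.1, t.2.2) with ha
  set b : α × β × γ → ℝ := fun t => pr p (fun ω => (Y ω, Z ω)) t.2 with hb
  set c : α × β × γ → ℝ := fun t => pr p Z t.2.2 with hc
  have e1 : ent p (fun ω => (X ω, Z ω))
      = -∑ t ∈ Finset.univ.image T, r t * Real.logb 2 (a t) := by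
    unfold ent
    rw [sum_image_comp p T (fun t => (t.1, t.2.2))
      (fun y => Real.logb 2 (pr p (fun ω => (X ω, Z ω)) y))]
  have e2 : ent p (fun ω => (Y ω, Z ω))
      = -∑ t ∈ Finset.univ.image T, r t * Real.logb 2 (b t) := by
    unfold ent
    rw [sum_image_comp p T (fun t => t.2)
      (fun y => Real.logb 2 (pr p (fun ω => (Y ω, Z ω)) y))]
  have e4 : ent p Z = -∑ t ∈ Finset.univ.image T, r t * Real.logb 2 (c t) := by
    unfold ent
    rw [sum_image_comp p T (fun t => t.2.2) (fun y => Real.logb 2 (pr p Z y))]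
  have e3 : ent p T = -∑ t ∈ Finset.univ.image T, r t * Real.logb 2 (r t) := rfl
  have hcmi : cmi p X Y Z = ∑ t ∈ Finset.univ.image T,
      (r t * Real.logb 2 (r t) + r t * Real.logb 2 (c t)
        - r t * Real.logb 2 (a t) - r t * Real.logb 2 (b t)) := by
    unfold cmi
    rw [e1, e2, e4, show ent p (fun ω => (X ω, Y ω, Z ω)) = ent p T from rfl, e3]
    rw [Finset.sum_sub_distrib, Finset.sum_sub_distrib, Finset.sum_add_distrib]
    ring
  have hlog2 : (0:ℝ) < Real.log 2 := Real.log_pos one_lt_two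
  have habc_nonneg : ∀ t, 0 ≤ a t * b t / c t := fun t =>
    div_nonneg (mul_nonneg (pr_nonneg hp _ _) (pr_nonneg hp _ _)) (pr_nonneg hp _ _)
  have key : ∀ t ∈ Finset.univ.image T,
      (r t - a t * b t / c t) / Real.log 2
        ≤ r t * Real.logb 2 (r t) + r t * Real.logb 2 (c t)
          - r t * Real.logb 2 (a t) - r t * Real.logb 2 (b t) := by
    intro t _
    rcases eq_or_lt_of_le (pr_nonneg hp T t) with h0 | h0
    · have h0' : r t = 0 := h0.symm
      rw [h0']
      simp only [zero_mul, zero_sub, sub_zero, zero_add, add_zero, neg_zero]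
      apply div_nonpos_of_nonpos_of_nonneg
      · simp [habc_nonneg t]
      · exact le_of_lt hlog2
    · have hra : r t ≤ a t := pr_le_pr_comp hp T (fun t => (t.1, t.2.2)) t
      have hrb : r t ≤ b t := pr_le_pr_comp hp T (fun t => t.2) t
      have hrc : r t ≤ c t := pr_le_pr_comp hp T (fun t => t.2.2) t
      have hap : 0 < a t := lt_of_lt_of_le h0 hra
      have hbp : 0 < b t := lt_of_lt_of_le h0 hrb
      have hcp : 0 < c t := lt_of_lt_of_le h0 hrc
      have hlog : Real.log (a t * b t / (r t * c t)) ≤ a t * b t / (r t * c t) - 1 :=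
        Real.log_le_sub_one_of_pos (by positivity)
      have hexp : Real.log (a t * b t / (r t * c t))
          = Real.log (a t) + Real.log (b t) - Real.log (r t) - Real.log (c t) := by
        rw [Real.log_div (by positivity) (by positivity),
          Real.log_mul (ne_of_gt hap) (ne_of_gt hbp),
          Real.log_mul (ne_of_gt h0) (ne_of_gt hcp)]
        ring
      have h2 : r t - a t * b t / c t
          ≤ r t * (Real.log (r t) + Real.log (c t) - Real.log (a t) - Real.log (b t)) := by
        have hm := mul_le_mul_of_nonneg_left hlog (le_of_lt h0)
        have hrw : r t * (a t * b t / (r t * c t) - 1) = a t * b t / c t - r t := by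
          have hr0 : r t ≠ 0 := ne_of_gt h0
          rw [mul_sub, mul_one, mul_div_assoc', mul_div_mul_left _ _ hr0]
        rw [hrw, hexp] at hm
        nlinarith [hm]
      have heq : r t * Real.logb 2 (r t) + r t * Real.logb 2 (c t)
          - r t * Real.logb 2 (a t) - r t * Real.logb 2 (b t)
          = r t * (Real.log (r t) + Real.log (c t) - Real.log (a t) - Real.log (b t))
            / Real.log 2 := by
        unfold Real.logb
        field_simp
      rw [heq]
      exact div_le_div_of_nonneg_right h2 (le_of_lt hlog2)
  have hsumr : ∑ t ∈ Finset.univ.image T, r t = 1 := by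
    rw [hr]
    rw [sum_pr_image p T, hp1]
  have hclaim : ∑ t ∈ Finset.univ.image T, a t * b t / c t ≤ 1 := by
    have hsubset : Finset.univ.image T ⊆
        (Finset.univ.image X) ×ˢ ((Finset.univ.image Y) ×ˢ (Finset.univ.image Z)) := by
      intro t ht
      obtain ⟨ω, -, hω⟩ := Finset.mem_image.mp ht
      subst hω
      simp [Finset.mem_product]
      exact ⟨⟨ω, rfl⟩, ⟨ω, rfl⟩, ⟨ω, rfl⟩⟩
    have h1 : ∑ t ∈ Finset.univ.image T, a t * b t / c t
        ≤ ∑ t ∈ (Finset.univ.image X) ×ˢ ((Finset.univ.image Y) ×ˢ (Finset.univ.image Z)),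
            a t * b t / c t :=
      Finset.sum_le_sum_of_subset_of_nonneg hsubset (fun t _ _ => habc_nonneg t)
    refine le_trans h1 ?_
    rw [Finset.sum_product]
    have hxsum : ∀ z ∈ Finset.univ.image Z,
        ∑ x ∈ Finset.univ.image X, pr p (fun ω => (X ω, Z ω)) (x, z) = pr p Z z :=
      fun z _ => sum_pr_pair_left p X Z z
    have hstep : ∀ x ∈ Finset.univ.image X,
        ∑ q ∈ (Finset.univ.image Y) ×ˢ (Finset.univ.image Z), a (x, q) * b (x, q) / c (x, q)
          = ∑ z ∈ Finset.univ.image Z,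
              pr p (fun ω => (X ω, Z ω)) (x, z) * (pr p Z z / pr p Z z) := by
      intro x _
      rw [Finset.sum_product]
      rw [Finset.sum_comm]
      refine Finset.sum_congr rfl fun z _ => ?_
      have : ∀ y, a (x, (y, z)) * b (x, (y, z)) / c (x, (y, z))
          = pr p (fun ω => (X ω, Z ω)) (x, z) * (pr p (fun ω => (Y ω, Z ω)) (y, z) / pr p Z z) :=
        fun y => by rw [ha, hb, hc]; ring
      simp only [this]
      rw [← Finset.mul_sum, ← Finset.sum_div, sum_pr_pair_left p Y Z z]
    rw [Finset.sum_congr rfl hstep, Finset.sum_comm]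
    have hz : ∀ z ∈ Finset.univ.image Z,
        ∑ x ∈ Finset.univ.image X,
            pr p (fun ω => (X ω, Z ω)) (x, z) * (pr p Z z / pr p Z z) ≤ pr p Z z := by
      intro z hz
      rw [← Finset.sum_mul, sum_pr_pair_left p X Z z]
      rcases eq_or_ne (pr p Z z) 0 with h | h
      · rw [h]; simp
      · rw [div_self h, mul_one]
    refine le_trans (Finset.sum_le_sum hz) ?_
    rw [sum_pr_image p Z, hp1]
  rw [hcmi]
  have := Finset.sum_le_sum key
  refine le_trans ?_ this
  rw [← Finset.sum_div, Finset.sum_sub_distrib, hsumr]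
  apply div_nonneg _ (le_of_lt hlog2)
  linarith [hclaim]

end Base2

section Base3

variable {Ω : Type*} [Fintype Ω] {α β γ δ : Type*} [DecidableEq α] [DecidableEq β] [DecidableEq γ]
  [DecidableEq δ] {p : Ω → ℝ}

lemma omega_nonempty (hp1 : ∑ ω, p ω = 1) : Nonempty Ω := by
  by_contra h
  rw [not_nonempty_iff] at h
  rw [Finset.univ_eq_empty, Finset.sum_empty] at hp1
  norm_num at hp1

lemma ent_const (hp1 : ∑ ω, p ω = 1) (X : Ω → α) (c : α) (h : ∀ ω, X ω = c) :
    ent p X = 0 := by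
  have hne : Nonempty Ω := omega_nonempty hp1
  obtain ⟨ω0⟩ := hne
  have himg : Finset.univ.image X = {c} := by
    apply Finset.Subset.antisymm
    · intro x hx
      obtain ⟨ω, -, hω⟩ := Finset.mem_image.mp hx
      rw [← hω, h ω]
      exact Finset.mem_singleton_self c
    · intro x hx
      rw [Finset.mem_singleton] at hx
      subst hx
      exact Finset.mem_image.mpr ⟨ω0, Finset.mem_univ ω0, h ω0⟩
  have hpr : pr p X c = 1 := by
    unfold pr
    rw [Finset.filter_true_of_mem (fun ω _ => h ω), ← hp1]
  unfold ent
  rw [himg, Finset.sum_singleton, hpr]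
  simp

lemma ent_le_logb_card [Fintype α] (hp : ∀ ω, 0 ≤ p ω) (hp1 : ∑ ω, p ω = 1) (X : Ω → α) :
    ent p X ≤ Real.logb 2 (Fintype.card α) := by
  have hne : Nonempty Ω := omega_nonempty hp1
  obtain ⟨ω0⟩ := hne
  have hαne : Nonempty α := ⟨X ω0⟩
  have hn : (0:ℝ) < (Fintype.card α : ℝ) := by
    exact_mod_cast Fintype.card_pos
  have hlog2 : (0:ℝ) < Real.log 2 := Real.log_pos one_lt_two
  have hsum1 : ∑ x ∈ Finset.univ.image X, pr p X x = 1 := by rw [sum_pr_image p X, hp1]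
  set n : ℝ := (Fintype.card α : ℝ) with hn'
  have key : ∀ x ∈ Finset.univ.image X,
      -(pr p X x * Real.logb 2 (pr p X x)) - pr p X x * Real.logb 2 n
        ≤ (1/n - pr p X x) / Real.log 2 := by
    intro x _
    rcases eq_or_lt_of_le (pr_nonneg hp X x) with h0 | h0
    · rw [← h0]
      simp only [zero_mul, sub_zero, zero_sub, neg_zero, mul_zero, sub_self]
      positivity
    · have hlog : Real.log (1/(pr p X x * n)) ≤ 1/(pr p X x * n) - 1 :=
        Real.log_le_sub_one_of_pos (by positivity)
      have hexp : Real.log (1/(pr p X x * n)) = -(Real.log (pr p X x) + Real.log n) := by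
        rw [one_div, Real.log_inv, Real.log_mul (ne_of_gt h0) (ne_of_gt hn)]
      rw [hexp] at hlog
      have hm := mul_le_mul_of_nonneg_left hlog (le_of_lt h0)
      have hrw : pr p X x * (1/(pr p X x * n) - 1) = 1/n - pr p X x := by
        field_simp
      rw [hrw] at hm
      calc -(pr p X x * Real.logb 2 (pr p X x)) - pr p X x * Real.logb 2 n
          = pr p X x * -(Real.log (pr p X x) + Real.log n) / Real.log 2 := by
            unfold Real.logb; field_simp; ring
        _ ≤ (1/n - pr p X x) / Real.log 2 :=
            div_le_div_of_nonneg_right hm (le_of_lt hlog2)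
  have hsumineq := Finset.sum_le_sum key
  have hleft : ∑ x ∈ Finset.univ.image X,
      (-(pr p X x * Real.logb 2 (pr p X x)) - pr p X x * Real.logb 2 n)
      = ent p X - Real.logb 2 n := by
    rw [Finset.sum_sub_distrib, ← Finset.sum_mul, hsum1, one_mul]
    unfold ent
    rw [← Finset.sum_neg_distrib]
  have hright : ∑ x ∈ Finset.univ.image X, (1/n - pr p X x) / Real.log 2 ≤ 0 := by
    rw [← Finset.sum_div, Finset.sum_sub_distrib, hsum1, Finset.sum_const]
    apply div_nonpos_of_nonpos_of_nonneg _ (le_of_lt hlog2)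
    have hcard : ((Finset.univ.image X).card : ℝ) ≤ n := by
      rw [hn']
      exact_mod_cast Finset.card_le_univ _
    have h2 : ((Finset.univ.image X).card : ℝ) * (1/n) ≤ 1 := by
      rw [mul_one_div, div_le_one hn]
      exact hcard
    simp only [nsmul_eq_mul]
    linarith
  rw [hleft] at hsumineq
  have := le_trans hsumineq hright
  linarith [this]

end Base3

section Base4

variable {Ω : Type*} [Fintype Ω] {α β γ δ : Type*} [DecidableEq α] [DecidableEq β] [DecidableEq γ]
  [DecidableEq δ] {p : Ω → ℝ}

lemma cond_reduce (hp : ∀ ω, 0 ≤ p ω) (hp1 : ∑ ω, p ω = 1)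
    (X : Ω → α) (W : Ω → β) (Z : Ω → γ) (f : β → γ) (hfZ : ∀ ω, Z ω = f (W ω)) :
    ent p (fun ω => (X ω, W ω)) - ent p W ≤ ent p (fun ω => (X ω, Z ω)) - ent p Z := by
  have h0 := cmi_nonneg hp hp1 X W Z
  have hWZ : ent p (fun ω => (W ω, Z ω)) = ent p W :=
    ent_congr hp (g := fun w => (w, f w)) (f := fun q => q.1)
      (fun ω => rfl) (fun ω => by simp [hfZ ω])
  have hXWZ : ent p (fun ω => (X ω, W ω, Z ω)) = ent p (fun ω => (X ω, W ω)) :=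
    ent_congr hp (f := fun q => (q.1, q.2.1)) (g := fun q => (q.1, q.2, f q.2))
      (fun ω => rfl) (fun ω => by simp [hfZ ω])
  unfold cmi at h0
  rw [hWZ, hXWZ] at h0
  linarith

lemma cmi_comp_le {β' : Type*} [DecidableEq β'] (hp : ∀ ω, 0 ≤ p ω) (hp1 : ∑ ω, p ω = 1)
    (X : Ω → α) (Y : Ω → β) (Z : Ω → γ) (f : β → β') :
    cmi p X (fun ω => f (Y ω)) Z ≤ cmi p X Y Z := by
  have h := cond_reduce hp hp1 X (fun ω => (Y ω, Z ω)) (fun ω => (f (Y ω), Z ω))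
    (fun q => (f q.1, q.2)) (fun ω => rfl)
  unfold cmi
  have e1 : ent p (fun ω => (X ω, Y ω, Z ω)) = ent p (fun ω => (X ω, (fun ω => (Y ω, Z ω)) ω)) := rfl
  have e2 : ent p (fun ω => (X ω, f (Y ω), Z ω))
      = ent p (fun ω => (X ω, (fun ω => (f (Y ω), Z ω)) ω)) := rfl
  linarith [h]

lemma ent_uniform_id [DecidableEq Ω] (hcard : 0 < Fintype.card Ω) :
    ent (fun _ : Ω => 1 / (Fintype.card Ω : ℝ)) (fun ω => ω) = Real.logb 2 (Fintype.card Ω) := by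
  have hc : (0:ℝ) < (Fintype.card Ω : ℝ) := by exact_mod_cast hcard
  have hpr : ∀ x : Ω, pr (fun _ : Ω => 1 / (Fintype.card Ω : ℝ)) (fun ω => ω) x
      = 1 / (Fintype.card Ω : ℝ) := by
    intro x
    unfold pr
    rw [show Finset.univ.filter (fun ω : Ω => ω = x) = {x} from by
      ext ω; simp]
    rw [Finset.sum_singleton]
  have himg : Finset.univ.image (fun ω : Ω => ω) = Finset.univ := by
    simp [Finset.image_id]
  unfold ent
  rw [himg]
  have : ∀ x ∈ (Finset.univ : Finset Ω),
      pr (fun _ : Ω => 1 / (Fintype.card Ω : ℝ)) (fun ω => ω) x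
        * Real.logb 2 (pr (fun _ : Ω => 1 / (Fintype.card Ω : ℝ)) (fun ω => ω) x)
      = 1 / (Fintype.card Ω : ℝ) * Real.logb 2 (1 / (Fintype.card Ω : ℝ)) := by
    intro x _
    rw [hpr x]
  rw [Finset.sum_congr rfl this, Finset.sum_const, Finset.card_univ, nsmul_eq_mul]
  rw [one_div, Real.logb_inv]
  field_simp

end Base4



section Main

variable {N K F ℓ : ℕ}

/-- uniform distribution -/
noncomputable def up (N F : ℕ) : (Fin N → Fin (2 ^ F)) → ℝ :=
  fun _ => 1 / (Fintype.card (Fin N → Fin (2 ^ F)) : ℝ)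

/-- caches 0..ℓ-1 -/
def Yc {K : Type} (W : Type) {V : K → Type} (g : ∀ k : K, W → V k)
    (P : K → Prop) [DecidablePred P] : W → ((i : K) → Option (V i)) :=
  fun ω i => if P i then some (g i ω) else none

def Zc (d : Fin ℓ → Fin N) (m : ℕ) : (Fin N → Fin (2 ^ F)) → (Fin ℓ → Option (Fin (2 ^ F))) :=
  fun ω j => if (j : ℕ) < m then some (ω (d j)) else none

def Pc (N F : ℕ) (m : ℕ) : (Fin N → Fin (2 ^ F)) → (Fin N → Option (Fin (2 ^ F))) :=
  fun ω i => if (i : ℕ) < m then some (ω i) else none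

def Qc (d : Fin ℓ → Fin N) (m : ℕ) :
    (Fin N → Fin (2 ^ F)) → (Fin N → Option (Fin (2 ^ F))) :=
  fun ω i => if (∃ j, d j = i) ∧ (i : ℕ) < m then some (ω i) else none

variable {V : Fin K → Type} [∀ k, Fintype (V k)] [∀ k, DecidableEq (V k)]

lemma up_nonneg : ∀ ω, 0 ≤ up N F ω := fun _ => by
  unfold up; positivity

lemma up_sum (hN : 0 < N) (hF : 0 < F) : ∑ ω, up N F ω = 1 := by
  unfold up
  rw [Finset.sum_const, Finset.card_univ, nsmul_eq_mul]
  have : (0:ℝ) < (Fintype.card (Fin N → Fin (2 ^ F)) : ℝ) := by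
    have : 0 < Fintype.card (Fin N → Fin (2 ^ F)) := Fintype.card_pos
    exact_mod_cast this
  field_simp

/-- The statement's Y-variable for step k equals a function of the full cache tuple. -/
lemma step_mono (hN : 0 < N) (hF : 0 < F) (hℓK : ℓ ≤ K)
    (g : ∀ k : Fin K, (Fin N → Fin (2 ^ F)) → V k)
    (d : Fin ℓ → Fin N) (k : Fin ℓ) :
    cmi (up N F) (fun ω => ω (d k))
      (fun ω => fun i : Fin K => if (i : ℕ) ≤ (k : ℕ) then some (g i ω) else none)
      (Zc d (k : ℕ))
    ≤ cmi (up N F) (fun ω => ω (d k))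
        (Yc _ g (fun i : Fin K => (i : ℕ) < ℓ)) (Zc d (k : ℕ)) := by
  have hY : (fun ω => fun i : Fin K => if (i : ℕ) ≤ (k : ℕ) then some (g i ω) else none)
      = fun ω => (fun y : (i : Fin K) → Option (V i) =>
          (fun i : Fin K => if (i : ℕ) ≤ (k : ℕ) then y i else none))
        (Yc _ g (fun i : Fin K => (i : ℕ) < ℓ) ω) := by
    funext ω i
    by_cases h : (i : ℕ) ≤ (k : ℕ)
    · have hik : (i : ℕ) < ℓ := lt_of_le_of_lt h k.isLt
      simp [h, Yc, hik]
    · simp [h]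
  rw [hY]
  exact cmi_comp_le up_nonneg (up_sum hN hF) (fun ω => ω (d k))
    (Yc _ g (fun i : Fin K => (i : ℕ) < ℓ)) (Zc d (k : ℕ))
    (fun y => (fun i : Fin K => if (i : ℕ) ≤ (k : ℕ) then y i else none))

lemma step_chain (hN : 0 < N) (hF : 0 < F) (hℓK : ℓ ≤ K)
    (g : ∀ k : Fin K, (Fin N → Fin (2 ^ F)) → V k)
    (d : Fin ℓ → Fin N) (k : Fin ℓ) :
    cmi (up N F) (fun ω => ω (d k))
        (Yc _ g (fun i : Fin K => (i : ℕ) < ℓ)) (Zc d (k : ℕ))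
    = ent (up N F) (Zc d ((k : ℕ) + 1))
      + ent (up N F) (fun ω => (Yc _ g (fun i : Fin K => (i : ℕ) < ℓ) ω, Zc d (k : ℕ) ω))
      - ent (up N F) (fun ω => (Yc _ g (fun i : Fin K => (i : ℕ) < ℓ) ω, Zc d ((k : ℕ) + 1) ω))
      - ent (up N F) (Zc d (k : ℕ)) := by
  have hp := @up_nonneg N F
  have hdflt : 0 < 2 ^ F := by positivity
  set Y := Yc (Fin N → Fin (2 ^ F)) g (fun i : Fin K => (i : ℕ) < ℓ) with hYdef
  have e1 : ent (up N F) (fun ω => (ω (d k), Zc d (k : ℕ) ω)) = ent (up N F) (Zc d ((k : ℕ) + 1)) := by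
    apply ent_congr hp
      (f := fun q : Fin (2 ^ F) × (Fin ℓ → Option (Fin (2 ^ F))) =>
        (fun j : Fin ℓ => if (j : ℕ) = (k : ℕ) then some q.1 else q.2 j))
      (g := fun z : Fin ℓ → Option (Fin (2 ^ F)) =>
        ((z k).getD ⟨0, hdflt⟩, fun j : Fin ℓ => if (j : ℕ) < (k : ℕ) then z j else none))
    · intro ω
      funext j
      rcases eq_or_ne (j : ℕ) (k : ℕ) with h | h
      · have : j = k := Fin.ext h
        subst this
        simp [Zc]
      · by_cases h2 : (j : ℕ) < (k : ℕ)
        · simp [Zc, h, h2, Nat.lt_succ_of_lt h2]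
        · have : ¬ ((j : ℕ) < (k : ℕ) + 1) := by omega
          simp [Zc, h, h2, this]
    · intro ω
      refine Prod.ext ?_ ?_
      · simp [Zc]
      · funext j
        by_cases h2 : (j : ℕ) < (k : ℕ)
        · simp [Zc, h2, Nat.lt_succ_of_lt h2]
        · simp [Zc, h2]
  have e2 : ent (up N F) (fun ω => (ω (d k), (Y ω, Zc d (k : ℕ) ω)))
      = ent (up N F) (fun ω => (Y ω, Zc d ((k : ℕ) + 1) ω)) := by
    apply ent_congr hp
      (f := fun q : Fin (2 ^ F) × (((i : Fin K) → Option (V i)) × (Fin ℓ → Option (Fin (2 ^ F)))) =>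
        (q.2.1, fun j : Fin ℓ => if (j : ℕ) = (k : ℕ) then some q.1 else q.2.2 j))
      (g := fun q : ((i : Fin K) → Option (V i)) × (Fin ℓ → Option (Fin (2 ^ F))) =>
        ((q.2 k).getD ⟨0, hdflt⟩, (q.1, fun j : Fin ℓ => if (j : ℕ) < (k : ℕ) then q.2 j else none)))
    · intro ω
      refine Prod.ext rfl ?_
      funext j
      rcases eq_or_ne (j : ℕ) (k : ℕ) with h | h
      · have : j = k := Fin.ext h
        subst this
        simp [Zc]
      · by_cases h2 : (j : ℕ) < (k : ℕ)
        · simp [Zc, h, h2, Nat.lt_succ_of_lt h2]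
        · have : ¬ ((j : ℕ) < (k : ℕ) + 1) := by omega
          simp [Zc, h, h2, this]
    · intro ω
      refine Prod.ext ?_ (Prod.ext rfl ?_)
      · simp [Zc]
      · funext j
        by_cases h2 : (j : ℕ) < (k : ℕ)
        · simp [Zc, h2, Nat.lt_succ_of_lt h2]
        · simp [Zc, h2]
  unfold cmi
  rw [e1, e2]

lemma step_sum (hN : 0 < N) (hF : 0 < F) (hℓK : ℓ ≤ K)
    (g : ∀ k : Fin K, (Fin N → Fin (2 ^ F)) → V k)
    (d : Fin ℓ → Fin N) :
    ∑ k : Fin ℓ, cmi (up N F) (fun ω => ω (d k))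
      (fun ω => fun i : Fin K => if (i : ℕ) ≤ (k : ℕ) then some (g i ω) else none)
      (Zc d (k : ℕ))
    ≤ ent (up N F) (Zc d ℓ)
      + ent (up N F) (Yc _ g (fun i : Fin K => (i : ℕ) < ℓ))
      - ent (up N F) (fun ω => (Yc _ g (fun i : Fin K => (i : ℕ) < ℓ) ω, Zc d ℓ ω)) := by
  have hp := @up_nonneg N F
  have hp1 := up_sum (N := N) (F := F) hN hF
  set Y := Yc (Fin N → Fin (2 ^ F)) g (fun i : Fin K => (i : ℕ) < ℓ) with hYdef
  have h1 : ∑ k : Fin ℓ, cmi (up N F) (fun ω => ω (d k))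
      (fun ω => fun i : Fin K => if (i : ℕ) ≤ (k : ℕ) then some (g i ω) else none)
      (Zc d (k : ℕ))
      ≤ ∑ k : Fin ℓ, (ent (up N F) (Zc d ((k : ℕ) + 1))
          + ent (up N F) (fun ω => (Y ω, Zc d (k : ℕ) ω))
          - ent (up N F) (fun ω => (Y ω, Zc d ((k : ℕ) + 1) ω))
          - ent (up N F) (Zc d (k : ℕ))) := by
    refine Finset.sum_le_sum fun k _ => ?_
    exact le_trans (step_mono hN hF hℓK g d k) (le_of_eq (step_chain hN hF hℓK g d k))
  refine le_trans h1 ?_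
  have h2 : ∑ k : Fin ℓ, (ent (up N F) (Zc d ((k : ℕ) + 1))
          + ent (up N F) (fun ω => (Y ω, Zc d (k : ℕ) ω))
          - ent (up N F) (fun ω => (Y ω, Zc d ((k : ℕ) + 1) ω))
          - ent (up N F) (Zc d (k : ℕ)))
      = ∑ m ∈ Finset.range ℓ, (ent (up N F) (Zc d (m + 1))
          + ent (up N F) (fun ω => (Y ω, Zc d m ω))
          - ent (up N F) (fun ω => (Y ω, Zc d (m + 1) ω))
          - ent (up N F) (Zc d m)) :=
    Fin.sum_univ_eq_sum_range (fun m => ent (up N F) (Zc d (m + 1))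
          + ent (up N F) (fun ω => (Y ω, Zc d m ω))
          - ent (up N F) (fun ω => (Y ω, Zc d (m + 1) ω))
          - ent (up N F) (Zc d m)) ℓ
  rw [h2]
  have h3 : ∀ mm : ℕ, (ent (up N F) (Zc d (mm + 1))
          + ent (up N F) (fun ω => (Y ω, Zc d mm ω))
          - ent (up N F) (fun ω => (Y ω, Zc d (mm + 1) ω))
          - ent (up N F) (Zc d mm))
      = (ent (up N F) (Zc d (mm + 1)) - ent (up N F) (Zc d mm))
        + (ent (up N F) (fun ω => (Y ω, Zc d mm ω))
            - ent (up N F) (fun ω => (Y ω, Zc d (mm + 1) ω))) := fun mm => by ring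
  simp only [h3]
  rw [Finset.sum_add_distrib, Finset.sum_range_sub (fun m => ent (up N F) (Zc d m)),
    Finset.sum_range_sub' (fun m => ent (up N F) (fun ω => (Y ω, Zc d m ω)))]
  have hG0 : ent (up N F) (Zc d 0) = 0 := by
    refine ent_const hp1 _ (fun j : Fin ℓ => (none : Option (Fin (2 ^ F)))) fun ω => ?_
    funext j
    simp [Zc]
  have hF0 : ent (up N F) (fun ω => (Y ω, Zc d 0 ω)) = ent (up N F) Y := by
    refine ent_congr hp (f := fun q : _ × (Fin ℓ → Option (Fin (2 ^ F))) => q.1)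
      (g := fun y => (y, fun j : Fin ℓ => (none : Option (Fin (2 ^ F)))))
      (fun ω => rfl) (fun ω => ?_)
    refine Prod.ext rfl ?_
    funext j
    simp [Zc]
  rw [hG0, hF0]
  ring_nf
  exact le_refl _

lemma shearer (hN : 0 < N) (hF : 0 < F) (hℓK : ℓ ≤ K)
    (g : ∀ k : Fin K, (Fin N → Fin (2 ^ F)) → V k)
    (d : Fin ℓ → Fin N) (hd : Function.Injective d) :
    ent (up N F) (Yc _ g (fun i : Fin K => (i : ℕ) < ℓ))
      + ∑ m ∈ Finset.range N, (if ∃ j, (d j : ℕ) = m then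
          (ent (up N F) (fun ω => (Yc _ g (fun i : Fin K => (i : ℕ) < ℓ) ω, Pc N F (m + 1) ω))
           - ent (up N F) (fun ω => (Yc _ g (fun i : Fin K => (i : ℕ) < ℓ) ω, Pc N F m ω))) else 0)
    ≤ ent (up N F) (fun ω => (Yc _ g (fun i : Fin K => (i : ℕ) < ℓ) ω, Zc d ℓ ω)) := by
  have hp := @up_nonneg N F
  have hp1 := up_sum (N := N) (F := F) hN hF
  have hdflt : 0 < 2 ^ F := by positivity
  set Y := Yc (Fin N → Fin (2 ^ F)) g (fun i : Fin K => (i : ℕ) < ℓ) with hYdef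
  -- telescoping of C m := ent (Y, Qc d m)
  have hCN : ent (up N F) (fun ω => (Y ω, Qc d N ω))
      = ent (up N F) (fun ω => (Y ω, Zc d ℓ ω)) := by
    refine ent_congr hp
      (f := fun q : _ × (Fin N → Option (Fin (2 ^ F))) =>
        (q.1, fun j : Fin ℓ => q.2 (d j)))
      (g := fun q : _ × (Fin ℓ → Option (Fin (2 ^ F))) =>
        (q.1, fun i : Fin N => if h : ∃ j, d j = i then q.2 h.choose else none))
      (fun ω => ?_) (fun ω => ?_)
    · refine Prod.ext rfl ?_
      funext j
      have hex : ∃ j', d j' = d j := ⟨j, rfl⟩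
      simp [Zc, Qc, hex, j.isLt, (d j).isLt]
    · refine Prod.ext rfl ?_
      funext i
      show Qc d N ω i = dite (∃ j, d j = i) (fun h => Zc d ℓ ω h.choose) (fun _ => none)
      by_cases h : ∃ j, d j = i
      · rw [dif_pos h]
        have hspec := h.choose_spec
        have hlt : ((h.choose : Fin ℓ) : ℕ) < ℓ := (h.choose).isLt
        simp only [Zc, Qc, if_pos hlt, hspec, if_pos (⟨h, i.isLt⟩ : (∃ j, d j = i) ∧ (i : ℕ) < N)]
      · rw [dif_neg h]
        have : ¬ ((∃ j, d j = i) ∧ (i : ℕ) < N) := fun hh => h hh.1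
        simp only [Qc, if_neg this]
  have hC0 : ent (up N F) (fun ω => (Y ω, Qc d 0 ω)) = ent (up N F) Y := by
    refine ent_congr hp (f := fun q : _ × (Fin N → Option (Fin (2 ^ F))) => q.1)
      (g := fun y => (y, fun i : Fin N => (none : Option (Fin (2 ^ F)))))
      (fun ω => rfl) (fun ω => ?_)
    refine Prod.ext rfl ?_
    funext i
    simp [Qc]
  have hstep : ∀ m ∈ Finset.range N,
      (if ∃ j, (d j : ℕ) = m then
          (ent (up N F) (fun ω => (Y ω, Pc N F (m + 1) ω))
           - ent (up N F) (fun ω => (Y ω, Pc N F m ω))) else 0)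
      ≤ ent (up N F) (fun ω => (Y ω, Qc d (m + 1) ω))
        - ent (up N F) (fun ω => (Y ω, Qc d m ω)) := by
    intro m hm
    rw [Finset.mem_range] at hm
    by_cases hex : ∃ j, (d j : ℕ) = m
    · rw [if_pos hex]
      obtain ⟨j0, hj0⟩ := hex
      have hkey := cond_reduce hp hp1 (fun ω => ω (d j0))
        (fun ω => (Y ω, Pc N F m ω)) (fun ω => (Y ω, Qc d m ω))
        (fun q : ((i : Fin K) → Option (V i)) × (Fin N → Option (Fin (2 ^ F))) =>
          (q.1, fun i : Fin N => if (∃ j, d j = i) ∧ (i : ℕ) < m then q.2 i else none))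
        (fun ω => ?_)
      · have e1 : ent (up N F) (fun ω => (ω (d j0), (Y ω, Pc N F m ω)))
            = ent (up N F) (fun ω => (Y ω, Pc N F (m + 1) ω)) := by
          refine ent_congr hp
            (f := fun q : Fin (2 ^ F) × (((i : Fin K) → Option (V i)) × (Fin N → Option (Fin (2 ^ F)))) =>
              (q.2.1, fun i : Fin N => if (i : ℕ) = m then some q.1 else q.2.2 i))
            (g := fun q : ((i : Fin K) → Option (V i)) × (Fin N → Option (Fin (2 ^ F))) =>
              ((q.2 (d j0)).getD ⟨0, hdflt⟩,
                (q.1, fun i : Fin N => if (i : ℕ) < m then q.2 i else none)))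
            (fun ω => ?_) (fun ω => ?_)
          · refine Prod.ext rfl ?_
            funext i
            rcases eq_or_ne (i : ℕ) m with h | h
            · have hii : i = d j0 := Fin.ext (by omega)
              subst hii
              simp [Pc, h]
            · by_cases h2 : (i : ℕ) < m
              · simp [Pc, h, h2, Nat.lt_succ_of_lt h2]
              · have : ¬ ((i : ℕ) < m + 1) := by omega
                simp [Pc, h, h2, this]
          · refine Prod.ext ?_ (Prod.ext rfl ?_)
            · have hlt : ((d j0 : Fin N) : ℕ) < m + 1 := by omega
              simp [Pc, hlt]
            · funext i
              by_cases h2 : (i : ℕ) < m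
              · simp [Pc, h2, Nat.lt_succ_of_lt h2]
              · simp [Pc, h2]
        have e2 : ent (up N F) (fun ω => (ω (d j0), (Y ω, Qc d m ω)))
            = ent (up N F) (fun ω => (Y ω, Qc d (m + 1) ω)) := by
          refine ent_congr hp
            (f := fun q : Fin (2 ^ F) × (((i : Fin K) → Option (V i)) × (Fin N → Option (Fin (2 ^ F)))) =>
              (q.2.1, fun i : Fin N => if (i : ℕ) = m then some q.1 else q.2.2 i))
            (g := fun q : ((i : Fin K) → Option (V i)) × (Fin N → Option (Fin (2 ^ F))) =>
              ((q.2 (d j0)).getD ⟨0, hdflt⟩,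
                (q.1, fun i : Fin N => if (i : ℕ) < m then q.2 i else none)))
            (fun ω => ?_) (fun ω => ?_)
          · refine Prod.ext rfl ?_
            funext i
            rcases eq_or_ne (i : ℕ) m with h | h
            · have hii : i = d j0 := Fin.ext (by omega)
              subst hii
              have hex2 : (∃ j, d j = d j0) ∧ ((d j0 : Fin N) : ℕ) < m + 1 :=
                ⟨⟨j0, rfl⟩, by omega⟩
              simp only [Qc, if_pos hex2, if_pos h]
            · by_cases h2 : (i : ℕ) < m
              · have hiff : ((∃ j, d j = i) ∧ (i : ℕ) < m + 1) ↔ ((∃ j, d j = i) ∧ (i : ℕ) < m) := by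
                  constructor
                  · rintro ⟨hj, -⟩; exact ⟨hj, h2⟩
                  · rintro ⟨hj, -⟩; exact ⟨hj, by omega⟩
                simp only [Qc, if_neg h]
                by_cases h3 : (∃ j, d j = i) ∧ (i : ℕ) < m
                · rw [if_pos (hiff.mpr h3), if_pos h3]
                · rw [if_neg (fun hh => h3 (hiff.mp hh)), if_neg h3]
              · have h4 : ¬ ((∃ j, d j = i) ∧ (i : ℕ) < m + 1) := by
                  rintro ⟨-, hlt⟩; omega
                have h5 : ¬ ((∃ j, d j = i) ∧ (i : ℕ) < m) := by
                  rintro ⟨-, hlt⟩; omega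
                simp only [Qc, if_neg h, if_neg h4, if_neg h5]
          · refine Prod.ext ?_ (Prod.ext rfl ?_)
            · have hex2 : (∃ j, d j = d j0) ∧ ((d j0 : Fin N) : ℕ) < m + 1 :=
                ⟨⟨j0, rfl⟩, by omega⟩
              simp only [Qc, if_pos hex2, Option.getD_some]
            · funext i
              by_cases h2 : (i : ℕ) < m
              · have hiff : ((∃ j, d j = i) ∧ (i : ℕ) < m + 1) ↔ ((∃ j, d j = i) ∧ (i : ℕ) < m) := by
                  constructor
                  · rintro ⟨hj, -⟩; exact ⟨hj, h2⟩
                  · rintro ⟨hj, -⟩; exact ⟨hj, by omega⟩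
                simp only [Qc, if_pos h2]
                by_cases h3 : (∃ j, d j = i) ∧ (i : ℕ) < m
                · rw [if_pos (hiff.mpr h3), if_pos h3]
                · rw [if_neg (fun hh => h3 (hiff.mp hh)), if_neg h3]
              · have h5 : ¬ ((∃ j, d j = i) ∧ (i : ℕ) < m) := by
                  rintro ⟨-, hlt⟩; omega
                simp only [Qc, if_neg h2, if_neg h5]
        rw [e1, e2] at hkey
        linarith
      · refine Prod.ext rfl ?_
        funext i
        show Qc d m ω i = if (∃ j, d j = i) ∧ (i : ℕ) < m then Pc N F m ω i else none
        by_cases h3 : (∃ j, d j = i) ∧ (i : ℕ) < m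
        · have hlt : (i : ℕ) < m := h3.2
          simp only [Qc, Pc, if_pos h3, if_pos hlt]
        · simp only [Qc, Pc, if_neg h3]
    · rw [if_neg hex]
      have hQeq : Qc (F := F) d (m + 1) = Qc d m := by
        funext ω i
        have hiff : ((∃ j, d j = i) ∧ (i : ℕ) < m + 1) ↔ ((∃ j, d j = i) ∧ (i : ℕ) < m) := by
          constructor
          · rintro ⟨⟨j, hj⟩, hlt⟩
            refine ⟨⟨j, hj⟩, ?_⟩
            have : (i : ℕ) ≠ m := fun hh => hex ⟨j, by rw [hj, hh]⟩
            omega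
          · rintro ⟨hj, hlt⟩; exact ⟨hj, by omega⟩
        simp only [Qc]
        by_cases h3 : (∃ j, d j = i) ∧ (i : ℕ) < m
        · rw [if_pos (hiff.mpr h3), if_pos h3]
        · rw [if_neg (fun hh => h3 (hiff.mp hh)), if_neg h3]
      rw [hQeq]
      simp
  have htel := Finset.sum_le_sum hstep
  rw [Finset.sum_range_sub (fun m => ent (up N F) (fun ω => (Y ω, Qc d m ω)))] at htel
  rw [hCN, hC0] at htel
  linarith

lemma card_omega_pos : 0 < Fintype.card (Fin N → Fin (2 ^ F)) := Fintype.card_pos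

lemma logb_card_omega : Real.logb 2 (Fintype.card (Fin N → Fin (2 ^ F))) = (N : ℝ) * (F : ℝ) := by
  rw [Fintype.card_fun, Fintype.card_fin, Fintype.card_fin]
  rw [← pow_mul]
  rw [Nat.cast_pow]
  rw [Real.logb_pow]
  rw [Nat.cast_ofNat, Real.logb_self_eq_one (by norm_num)]
  push_cast
  ring

lemma entZ_le (hN : 0 < N) (hF : 0 < F) (d : Fin ℓ → Fin N) :
    ent (up N F) (Zc d ℓ) ≤ (ℓ : ℝ) * (F : ℝ) := by
  have hp := @up_nonneg N F
  have hp1 := up_sum (N := N) (F := F) hN hF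
  have hZ : Zc (F := F) d ℓ = fun ω => (fun v : Fin ℓ → Fin (2 ^ F) =>
      (fun j : Fin ℓ => some (v j))) (fun j => ω (d j)) := by
    funext ω j
    simp [Zc, j.isLt]
  rw [hZ]
  refine le_trans (ent_comp_le hp (fun ω => fun j : Fin ℓ => ω (d j))
    (fun v : Fin ℓ → Fin (2 ^ F) => (fun j : Fin ℓ => some (v j)))) ?_
  refine le_trans (ent_le_logb_card hp hp1 _) ?_
  rw [Fintype.card_fun, Fintype.card_fin, Fintype.card_fin]
  rw [← pow_mul, Nat.cast_pow, Real.logb_pow,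
    Nat.cast_ofNat, Real.logb_self_eq_one (by norm_num)]
  push_cast
  ring_nf
  exact le_refl _

lemma entY_le {M : ℝ} (hN : 0 < N) (hF : 0 < F) (hℓK : ℓ ≤ K) (hM : 0 ≤ M)
    (hV : ∀ k, Fintype.card (V k) ≤ ⌊(2 : ℝ) ^ ((F : ℝ) * M)⌋₊)
    (g : ∀ k : Fin K, (Fin N → Fin (2 ^ F)) → V k) :
    ent (up N F) (Yc _ g (fun i : Fin K => (i : ℕ) < ℓ)) ≤ (ℓ : ℝ) * ((F : ℝ) * M) := by
  have hp := @up_nonneg N F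
  have hp1 := up_sum (N := N) (F := F) hN hF
  have hY : Yc (Fin N → Fin (2 ^ F)) g (fun i : Fin K => (i : ℕ) < ℓ)
      = fun ω => (fun y : (j : Fin ℓ) → V (Fin.castLE hℓK j) =>
          (fun i : Fin K => if hi : (i : ℕ) < ℓ then some (y ⟨(i : ℕ), hi⟩) else none))
        (fun j : Fin ℓ => g (Fin.castLE hℓK j) ω) := by
    funext ω i
    by_cases hi : (i : ℕ) < ℓ
    · simp only [Yc, if_pos hi, dif_pos hi]
      rfl
    · simp only [Yc, if_neg hi, dif_neg hi]
  rw [hY]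
  have hcomp := ent_comp_le (p := up N F) hp (fun ω => fun j : Fin ℓ => g (Fin.castLE hℓK j) ω)
    (fun y : (j : Fin ℓ) → V (Fin.castLE hℓK j) =>
      (fun i : Fin K => if hi : (i : ℕ) < ℓ then some (y ⟨(i : ℕ), hi⟩) else none))
  refine le_trans hcomp ?_
  have hcard := ent_le_logb_card (p := up N F) hp hp1
    (fun ω => fun j : Fin ℓ => g (Fin.castLE hℓK j) ω)
  refine le_trans hcard ?_
  obtain ⟨ω0⟩ : Nonempty (Fin N → Fin (2 ^ F)) := inferInstance
  have hcardpos : 0 < Fintype.card ((j : Fin ℓ) → V (Fin.castLE hℓK j)) := by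
    have : Nonempty ((j : Fin ℓ) → V (Fin.castLE hℓK j)) := ⟨fun j => g _ ω0⟩
    exact Fintype.card_pos
  have hcard_le : (Fintype.card ((j : Fin ℓ) → V (Fin.castLE hℓK j)) : ℝ)
      ≤ ((2 : ℝ) ^ ((F : ℝ) * M)) ^ ℓ := by
    rw [Fintype.card_pi]
    have h1 : ∏ j : Fin ℓ, Fintype.card (V (Fin.castLE hℓK j))
        ≤ ∏ j : Fin ℓ, ⌊(2 : ℝ) ^ ((F : ℝ) * M)⌋₊ :=
      Finset.prod_le_prod' fun j _ => hV _
    rw [Finset.prod_const, Finset.card_univ, Fintype.card_fin] at h1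
    have h2 : ((∏ j : Fin ℓ, Fintype.card (V (Fin.castLE hℓK j)) : ℕ) : ℝ)
        ≤ ((⌊(2 : ℝ) ^ ((F : ℝ) * M)⌋₊ ^ ℓ : ℕ) : ℝ) := by exact_mod_cast h1
    refine le_trans h2 ?_
    rw [Nat.cast_pow]
    refine pow_le_pow_left₀ (by positivity) (Nat.floor_le (by positivity)) ℓ
  refine le_trans (Real.logb_le_logb_of_le one_lt_two (by exact_mod_cast hcardpos) hcard_le) ?_
  rw [Real.logb_pow, Real.logb_rpow (by norm_num) (by norm_num)]

lemma AA_N (hN : 0 < N) (hF : 0 < F) (hℓK : ℓ ≤ K)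
    (g : ∀ k : Fin K, (Fin N → Fin (2 ^ F)) → V k) :
    ent (up N F) (fun ω => (Yc _ g (fun i : Fin K => (i : ℕ) < ℓ) ω, Pc N F N ω))
      = (N : ℝ) * (F : ℝ) := by
  have hp := @up_nonneg N F
  have hdflt : 0 < 2 ^ F := by positivity
  have h1 : ent (up N F) (fun ω => (Yc (Fin N → Fin (2 ^ F)) g (fun i : Fin K => (i : ℕ) < ℓ) ω, Pc N F N ω))
      = ent (up N F) (fun ω => ω) := by
    refine ent_congr hp
      (f := fun q : ((i : Fin K) → Option (V i)) × (Fin N → Option (Fin (2 ^ F))) =>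
        (fun i : Fin N => (q.2 i).getD ⟨0, hdflt⟩))
      (g := fun ω : Fin N → Fin (2 ^ F) =>
        (Yc (Fin N → Fin (2 ^ F)) g (fun i : Fin K => (i : ℕ) < ℓ) ω, Pc N F N ω))
      (fun ω => ?_) (fun ω => rfl)
    funext i
    simp [Pc, i.isLt]
  rw [h1]
  unfold up
  rw [ent_uniform_id (card_omega_pos (N := N) (F := F)), logb_card_omega]

lemma AA_0 (hN : 0 < N) (hF : 0 < F) (hℓK : ℓ ≤ K)
    (g : ∀ k : Fin K, (Fin N → Fin (2 ^ F)) → V k) :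
    ent (up N F) (fun ω => (Yc _ g (fun i : Fin K => (i : ℕ) < ℓ) ω, Pc N F 0 ω))
      = ent (up N F) (Yc _ g (fun i : Fin K => (i : ℕ) < ℓ)) := by
  have hp := @up_nonneg N F
  refine ent_congr hp (f := fun q : _ × (Fin N → Option (Fin (2 ^ F))) => q.1)
    (g := fun y => (y, fun i : Fin N => (none : Option (Fin (2 ^ F)))))
    (fun ω => rfl) (fun ω => ?_)
  refine Prod.ext rfl ?_
  funext i
  simp [Pc]

lemma card_inj_le (hℓN : ℓ ≤ N) :
    (Finset.univ.filter (fun d : Fin ℓ → Fin N => Function.Injective d)).card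
      ≤ N.choose ℓ * ℓ.factorial := by
  have h1 : (Finset.univ.filter (fun d : Fin ℓ → Fin N => Function.Injective d)).card
      = Fintype.card {d : Fin ℓ → Fin N // Function.Injective d} :=
    (Fintype.card_subtype _).symm
  rw [h1, Fintype.card_congr (Equiv.subtypeInjectiveEquivEmbedding (Fin ℓ) (Fin N)),
    Fintype.card_embedding_eq, Fintype.card_fin, Fintype.card_fin,
    Nat.descFactorial_eq_factorial_mul_choose]
  rw [Nat.mul_comm]

lemma cnt_sym (i i' : Fin N) :
    ((Finset.univ.filter (fun d : Fin ℓ → Fin N => Function.Injective d)).filter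
        (fun d => ∃ j, d j = i)).card
    = ((Finset.univ.filter (fun d : Fin ℓ → Fin N => Function.Injective d)).filter
        (fun d => ∃ j, d j = i')).card := by
  refine Finset.card_bij' (fun d _ => (Equiv.swap i i') ∘ d) (fun d _ => (Equiv.swap i i') ∘ d)
    ?_ ?_ ?_ ?_
  · intro d hd
    simp only [Finset.mem_filter, Finset.mem_univ, true_and] at hd ⊢
    obtain ⟨hinj, j, hj⟩ := hd
    refine ⟨(Equiv.swap i i').injective.comp hinj, j, ?_⟩
    simp [Function.comp, hj]
  · intro d hd
    simp only [Finset.mem_filter, Finset.mem_univ, true_and] at hd ⊢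
    obtain ⟨hinj, j, hj⟩ := hd
    refine ⟨(Equiv.swap i i').injective.comp hinj, j, ?_⟩
    rw [Equiv.swap_comm]
    simp [Function.comp, hj]
  · intro d _
    funext x
    simp [Function.comp, Equiv.swap_apply_self]
  · intro d _
    funext x
    simp [Function.comp, Equiv.swap_apply_self]

lemma cnt_total :
    ∑ i : Fin N, ((Finset.univ.filter (fun d : Fin ℓ → Fin N => Function.Injective d)).filter
        (fun d => ∃ j, d j = i)).card
    = (Finset.univ.filter (fun d : Fin ℓ → Fin N => Function.Injective d)).card * ℓ := by
  have h1 : ∀ i : Fin N,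
      ((Finset.univ.filter (fun d : Fin ℓ → Fin N => Function.Injective d)).filter
        (fun d => ∃ j, d j = i)).card
      = ∑ d ∈ Finset.univ.filter (fun d : Fin ℓ → Fin N => Function.Injective d),
          (if ∃ j, d j = i then 1 else 0) := fun i => Finset.card_filter _ _
  simp only [h1]
  rw [Finset.sum_comm]
  have h2 : ∀ d ∈ Finset.univ.filter (fun d : Fin ℓ → Fin N => Function.Injective d),
      ∑ i : Fin N, (if ∃ j, d j = i then 1 else 0) = ℓ := by
    intro d hd
    rw [Finset.mem_filter] at hd
    have h3 : ∑ i : Fin N, (if ∃ j, d j = i then 1 else 0)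
        = (Finset.univ.filter (fun i : Fin N => ∃ j, d j = i)).card :=
      (Finset.card_filter _ _).symm
    rw [h3]
    have h4 : Finset.univ.filter (fun i : Fin N => ∃ j, d j = i)
        = Finset.univ.image d := by
      ext i
      simp [eq_comm]
    rw [h4, Finset.card_image_of_injective _ hd.2, Finset.card_univ, Fintype.card_fin]
  rw [Finset.sum_congr rfl h2, Finset.sum_const, smul_eq_mul]

lemma main_bound (hN : 0 < N) (hK : 0 < K) (hF : 0 < F)
    (M : ℝ) (hM : 0 ≤ M)
    (hV : ∀ k, Fintype.card (V k) ≤ ⌊(2 : ℝ) ^ ((F : ℝ) * M)⌋₊)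
    (g : ∀ k : Fin K, (Fin N → Fin (2 ^ F)) → V k)
    (hℓ1 : 1 ≤ ℓ) (hℓ2 : ℓ ≤ min K N) :
    ∑ k : Fin ℓ, (1 / ((F : ℝ) * (N.choose ℓ : ℝ) * (ℓ.factorial : ℝ))) *
        ∑ d ∈ Finset.univ.filter (fun d : Fin ℓ → Fin N => Function.Injective d),
          cmi (up N F)
            (fun ω => ω (d k))
            (fun ω => fun i : Fin K =>
              if (i : ℕ) ≤ (k : ℕ) then some (g i ω) else none)
            (Zc d (k : ℕ))
      ≤ (ℓ : ℝ) ^ 2 * M / (N : ℝ) := by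
  have hℓK : ℓ ≤ K := le_trans hℓ2 (min_le_left _ _)
  have hℓN : ℓ ≤ N := le_trans hℓ2 (min_le_right _ _)
  have hCpos : 0 < N.choose ℓ := Nat.choose_pos hℓN
  have hfactpos : 0 < ℓ.factorial := Nat.factorial_pos ℓ
  have hNR : (0:ℝ) < (N:ℝ) := by exact_mod_cast hN
  have hFR : (0:ℝ) < (F:ℝ) := by exact_mod_cast hF
  have hCR : (0:ℝ) < (N.choose ℓ : ℝ) := by exact_mod_cast hCpos
  have hfactR : (0:ℝ) < (ℓ.factorial : ℝ) := by exact_mod_cast hfactpos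
  have hcoefpos : (0:ℝ) < 1 / ((F : ℝ) * (N.choose ℓ : ℝ) * (ℓ.factorial : ℝ)) := by positivity
  -- abbreviations
  set AA : ℕ → ℝ := fun m =>
    ent (up N F) (fun ω => (Yc (Fin N → Fin (2 ^ F)) g (fun i : Fin K => (i : ℕ) < ℓ) ω,
      Pc N F m ω)) with hAA
  set y : ℝ := ent (up N F) (Yc (Fin N → Fin (2 ^ F)) g (fun i : Fin K => (i : ℕ) < ℓ)) with hy
  set inj := Finset.univ.filter (fun d : Fin ℓ → Fin N => Function.Injective d) with hinjdef
  -- swap the two sums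
  rw [← Finset.mul_sum, Finset.sum_comm]
  -- per-d bound
  have hd_bound : ∀ d ∈ inj, ∑ k : Fin ℓ, cmi (up N F)
        (fun ω => ω (d k))
        (fun ω => fun i : Fin K =>
          if (i : ℕ) ≤ (k : ℕ) then some (g i ω) else none)
        (Zc d (k : ℕ))
      ≤ (ℓ : ℝ) * (F : ℝ)
        - ∑ m ∈ Finset.range N, (if ∃ j, (d j : ℕ) = m then (AA (m + 1) - AA m) else 0) := by
    intro d hd
    rw [hinjdef, Finset.mem_filter] at hd
    have h1 : ∑ k : Fin ℓ, cmi (up N F)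
          (fun ω => ω (d k))
          (fun ω => fun i : Fin K =>
            if (i : ℕ) ≤ (k : ℕ) then some (g i ω) else none)
          (Zc d (k : ℕ))
        ≤ ent (up N F) (Zc d ℓ) + y
          - ent (up N F) (fun ω => (Yc (Fin N → Fin (2 ^ F)) g
              (fun i : Fin K => (i : ℕ) < ℓ) ω, Zc d ℓ ω)) :=
      step_sum hN hF hℓK g d
    have h2 := entZ_le (ℓ := ℓ) hN hF d
    have h3 : y + ∑ m ∈ Finset.range N,
          (if ∃ j, (d j : ℕ) = m then (AA (m + 1) - AA m) else 0)
        ≤ ent (up N F) (fun ω => (Yc (Fin N → Fin (2 ^ F)) g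
            (fun i : Fin K => (i : ℕ) < ℓ) ω, Zc d ℓ ω)) :=
      shearer hN hF hℓK g d hd.2
    linarith
  refine le_trans (mul_le_mul_of_nonneg_left (Finset.sum_le_sum hd_bound) (le_of_lt hcoefpos)) ?_
  -- compute the sum of the bounds
  rw [Finset.sum_sub_distrib, Finset.sum_const, nsmul_eq_mul]
  -- double counting
  set c0 : ℕ := (inj.filter (fun d => ∃ j, d j = (⟨0, hN⟩ : Fin N))).card with hc0
  have hcount : ∑ d ∈ inj, ∑ m ∈ Finset.range N,
      (if ∃ j, (d j : ℕ) = m then (AA (m + 1) - AA m) else 0)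
      = (c0 : ℝ) * (AA N - AA 0) := by
    rw [Finset.sum_comm]
    have hper : ∀ m ∈ Finset.range N,
        ∑ d ∈ inj, (if ∃ j, (d j : ℕ) = m then (AA (m + 1) - AA m) else 0)
          = (c0 : ℝ) * (AA (m + 1) - AA m) := by
      intro m hm
      rw [Finset.mem_range] at hm
      have e1 : ∑ d ∈ inj, (if ∃ j, (d j : ℕ) = m then (AA (m + 1) - AA m) else 0)
          = ∑ d ∈ inj.filter (fun d => ∃ j, (d j : ℕ) = m), (AA (m + 1) - AA m) :=
        (Finset.sum_filter _ _).symm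
      rw [e1, Finset.sum_const, nsmul_eq_mul]
      congr 1
      have e2 : inj.filter (fun d => ∃ j, (d j : ℕ) = m)
          = inj.filter (fun d => ∃ j, d j = (⟨m, hm⟩ : Fin N)) := by
        refine Finset.filter_congr fun d _ => ?_
        constructor
        · rintro ⟨j, hj⟩; exact ⟨j, Fin.ext hj⟩
        · rintro ⟨j, hj⟩; exact ⟨j, by rw [hj]⟩
      rw [e2]
      exact_mod_cast congrArg Nat.cast (cnt_sym (⟨m, hm⟩ : Fin N) (⟨0, hN⟩ : Fin N))
    rw [Finset.sum_congr rfl hper, ← Finset.mul_sum,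
      Finset.sum_range_sub (fun m => AA m)]
  rw [hcount]
  -- endpoints
  have hAAN : AA N = (N : ℝ) * (F : ℝ) := AA_N hN hF hℓK g
  have hAA0 : AA 0 = y := AA_0 hN hF hℓK g
  rw [hAAN, hAA0]
  -- counting identities
  have hc0N : N * c0 = inj.card * ℓ := by
    have htot := cnt_total (N := N) (ℓ := ℓ)
    have hall : ∀ i : Fin N,
        ((Finset.univ.filter (fun d : Fin ℓ → Fin N => Function.Injective d)).filter
          (fun d => ∃ j, d j = i)).card = c0 := fun i => cnt_sym i (⟨0, hN⟩ : Fin N)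
    rw [Finset.sum_congr rfl (fun i _ => hall i), Finset.sum_const, Finset.card_univ,
      Fintype.card_fin, smul_eq_mul] at htot
    exact htot
  have hTle : inj.card ≤ N.choose ℓ * ℓ.factorial := card_inj_le hℓN
  have hYb : y ≤ (ℓ : ℝ) * ((F : ℝ) * M) := entY_le hN hF hℓK hM hV g
  -- final arithmetic
  have hc0NR : (N : ℝ) * (c0 : ℝ) = (inj.card : ℝ) * (ℓ : ℝ) := by exact_mod_cast hc0N
  have hTleR : (inj.card : ℝ) ≤ (N.choose ℓ : ℝ) * (ℓ.factorial : ℝ) := by exact_mod_cast hTle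
  have hc0R : (0:ℝ) ≤ (c0 : ℝ) := Nat.cast_nonneg c0
  have hstep1 : (inj.card : ℝ) * ((ℓ : ℝ) * (F : ℝ)) - (c0 : ℝ) * ((N : ℝ) * (F : ℝ) - y)
      ≤ (c0 : ℝ) * ((ℓ : ℝ) * ((F : ℝ) * M)) := by
    nlinarith [mul_le_mul_of_nonneg_left hYb hc0R]
  refine le_trans (mul_le_mul_of_nonneg_left hstep1 (le_of_lt hcoefpos)) ?_
  rw [one_div, inv_mul_eq_div, div_le_div_iff₀ (by positivity) hNR]
  have e : (c0:ℝ) * ((ℓ:ℝ) * ((F:ℝ) * M)) * (N:ℝ)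
      = (inj.card:ℝ) * (ℓ:ℝ) * ((ℓ:ℝ) * ((F:ℝ) * M)) := by
    linear_combination ((ℓ:ℝ) * ((F:ℝ) * M)) * hc0NR
  have hnn : (0:ℝ) ≤ (ℓ:ℝ) * ((ℓ:ℝ) * ((F:ℝ) * M)) := by positivity
  have e2 : (inj.card:ℝ) * (ℓ:ℝ) * ((ℓ:ℝ) * ((F:ℝ) * M))
      ≤ ((N.choose ℓ : ℝ) * (ℓ.factorial : ℝ)) * (ℓ:ℝ) * ((ℓ:ℝ) * ((F:ℝ) * M)) := by
    have := mul_le_mul_of_nonneg_right hTleR hnn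
    nlinarith [this]
  have e3 : ((N.choose ℓ : ℝ) * (ℓ.factorial : ℝ)) * (ℓ:ℝ) * ((ℓ:ℝ) * ((F:ℝ) * M))
      = (ℓ : ℝ) ^ 2 * M * ((F : ℝ) * (N.choose ℓ : ℝ) * (ℓ.factorial : ℝ)) := by ring
  linarith

end Main

/-- **Lemma 3, part (ii).** With messages i.i.d. uniform (uniform distribution on
`Ω = Fin N → Fin (2^F)`) and caches `V_k = g_k(W_1,…,W_N)` of size at most
`⌊2^{F·M}⌋`, for every `ℓ ∈ {1,…,min(K,N)}`:
`∑_{k=1}^{ℓ} α_k ≤ ℓ²·M/N`, where `α_k` averages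
`(1/F)·I(W_{d_k}; V_1,…,V_k | W_{d_1},…,W_{d_{k−1}})` over all ordered
`ℓ`-tuples `d` with pairwise distinct entries (below `k : Fin ℓ` is 0-based). -/
theorem alpha_bound_ii
    (N K F : ℕ) (hN : 0 < N) (hK : 0 < K) (hF : 0 < F)
    (M : ℝ) (hM : 0 ≤ M)
    (V : Fin K → Type) [∀ k, Fintype (V k)] [∀ k, DecidableEq (V k)]
    (hV : ∀ k, Fintype.card (V k) ≤ ⌊(2 : ℝ) ^ ((F : ℝ) * M)⌋₊)
    (g : ∀ k : Fin K, (Fin N → Fin (2 ^ F)) → V k)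
    (ℓ : ℕ) (hℓ1 : 1 ≤ ℓ) (hℓ2 : ℓ ≤ min K N) :
    ∑ k : Fin ℓ, (1 / ((F : ℝ) * (N.choose ℓ : ℝ) * (ℓ.factorial : ℝ))) *
        ∑ d ∈ Finset.univ.filter (fun d : Fin ℓ → Fin N => Function.Injective d),
          cmi (fun _ : Fin N → Fin (2 ^ F) =>
                (1 : ℝ) / (Fintype.card (Fin N → Fin (2 ^ F)) : ℝ))
            (fun ω => ω (d k))
            (fun ω => fun i : Fin K =>
              if (i : ℕ) ≤ (k : ℕ) then some (g i ω) else none)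
            (fun ω => fun j : Fin ℓ =>
              if (j : ℕ) < (k : ℕ) then some (ω (d j)) else none)
      ≤ (ℓ : ℝ) ^ 2 * M / (N : ℝ) := by
  exact main_bound hN hK hF M hM hV g hℓ1 hℓ2
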